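/- The 8×8 matrix K_4(i) over the Gaussian rationals (or complexes) with rows [1,1,1,1,1,1,1,1], [1,i,-i,1,-1,i,-i,-1], [1,-i,-1,i,i,-1,-i,1], [1,1,i,i,-i,-i,-1,-1], [1,-1,i,-i,i,-i,1,-1], [1,i,-1,-i,-i,-1,i,1], [1,-i,-i,-1,1,i,i,-1], [1,-1,1,-1,-1,1,-1,1] satisfies K_4(i) · K_4(i)* = 8·I_8, where K_4(i)* is the conjugate transpose; hence K_4(i) is a GBH matrix of order 8. -/

import Mathlib

open Matrix Complex

private lemma v4 (a b c d e f g h : ℂ) : ![a,b,c,d,e,f,g,h] (4:Fin 8) = e := rfl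
private lemma v5 (a b c d e f g h : ℂ) : ![a,b,c,d,e,f,g,h] (5:Fin 8) = f := rfl
private lemma v6 (a b c d e f g h : ℂ) : ![a,b,c,d,e,f,g,h] (6:Fin 8) = g := rfl
private lemma v7 (a b c d e f g h : ℂ) : ![a,b,c,d,e,f,g,h] (7:Fin 8) = h := rfl

set_option maxHeartbeats 4000000 in
/-- The 8×8 matrix `K₄(i)` over ℂ satisfies `K₄(i) · K₄(i)ᴴ = 8 • I₈`,
where `K₄(i)ᴴ` is the conjugate transpose (which, for entries among the fourth roots of
unity, is the transpose of the entrywise inverse); hence `K₄(i)` is a GBH matrix of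
order 8. -/
theorem stmt9 (K : Matrix (Fin 8) (Fin 8) ℂ)
    (hK : K = !![1, 1,  1,  1,  1,  1,  1,  1;
                 1, I,  -I, 1,  -1, I,  -I, -1;
                 1, -I, -1, I,  I,  -1, -I, 1;
                 1, 1,  I,  I,  -I, -I, -1, -1;
                 1, -1, I,  -I, I,  -I, 1,  -1;
                 1, I,  -1, -I, -I, -1, I,  1;
                 1, -I, -I, -1, 1,  I,  I,  -1;
                 1, -1, 1,  -1, -1, 1,  -1, 1]) :
    K * Kᴴ = (8 : ℂ) • 1 := by
  subst hK
  ext i j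
  rw [Matrix.mul_apply, Fin.sum_univ_eight]
  fin_cases i <;> fin_cases j <;>
    simp only [Matrix.conjTranspose_apply, Matrix.one_apply, Matrix.smul_apply,
      Matrix.of_apply, Matrix.cons_val', Matrix.cons_val_zero, Matrix.cons_val_one,
      Matrix.head_cons, Matrix.head_fin_const, Matrix.empty_val', Matrix.cons_val_fin_one,
      Matrix.cons_val_two, Matrix.cons_val_three, Matrix.cons_val_four, Matrix.vecHead,
      Matrix.vecTail, v4, v5, v6, v7, _root_.map_one, map_neg, Complex.conj_I, Fin.mk_zero,
      Fin.mk_one, if_true, if_false, Function.comp] <;>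
    norm_num [Fin.ext_iff, Matrix.cons_val_two]
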